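/- The two order-2 isometries h_1 = Ref_{H-E_1-E_2-E_7} ∘ Ref_{H-E_3-E_4-E_7} ∘ Ref_{H-E_5-E_6-E_7} and h_2 = Ref_{E_1-E_2} ∘ Ref_{E_3-E_4} ∘ Ref_{E_5-E_6} of the lattice (Z^8, Q) of signature (1,7) are not conjugate in the full isometry group O(1,7)(Z) of the lattice. -/

import Mathlib

namespace Stmt9Aux
open Matrix
@[simp] lemma cons_val_five {α : Type*} {m : ℕ} (x : α) (u : Fin (m+5) → α) :
    vecCons x u 5 = vecHead (vecTail (vecTail (vecTail (vecTail u)))) := rfl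
@[simp] lemma cons_val_six {α : Type*} {m : ℕ} (x : α) (u : Fin (m+6) → α) :
    vecCons x u 6 = vecHead (vecTail (vecTail (vecTail (vecTail (vecTail u))))) := rfl
@[simp] lemma cons_val_seven {α : Type*} {m : ℕ} (x : α) (u : Fin (m+7) → α) :
    vecCons x u 7 = vecHead (vecTail (vecTail (vecTail (vecTail (vecTail (vecTail u)))))) := rfl
@[simp] lemma fin8_val2 : ((2 : Fin 8) : ℕ) = 2 := rfl
@[simp] lemma fin8_val3 : ((3 : Fin 8) : ℕ) = 3 := rfl
@[simp] lemma fin8_val4 : ((4 : Fin 8) : ℕ) = 4 := rfl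
@[simp] lemma fin8_val5 : ((5 : Fin 8) : ℕ) = 5 := rfl
@[simp] lemma fin8_val6 : ((6 : Fin 8) : ℕ) = 6 := rfl
@[simp] lemma fin8_val7 : ((7 : Fin 8) : ℕ) = 7 := rfl
end Stmt9Aux

open Stmt9Aux in
/-- The order-2 isometries
`h₁ = Ref_{H-E₁-E₂-E₇} ∘ Ref_{H-E₃-E₄-E₇} ∘ Ref_{H-E₅-E₆-E₇}` and
`h₂ = Ref_{E₁-E₂} ∘ Ref_{E₃-E₄} ∘ Ref_{E₅-E₆}` of `(ℤ^8, Q)` of signature `(1,7)` are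
not conjugate in the full isometry group `O(1,7)(ℤ)` of the lattice. -/
theorem stmt_9
    (Q : (Fin 8 → ℤ) → (Fin 8 → ℤ) → ℤ)
    (hQ : ∀ x y, Q x y = ∑ i : Fin 8, (if (i : ℕ) = 0 then 1 else -1) * x i * y i)
    (Ref : (Fin 8 → ℤ) → (Fin 8 → ℤ) → (Fin 8 → ℤ))
    (hRef : ∀ v w, Ref v w = w + Q v w • v)
    (h₁ h₂ : (Fin 8 → ℤ) → (Fin 8 → ℤ))
    (hh₁ : ∀ w, h₁ w = Ref ![1,-1,-1,0,0,0,0,-1]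
        (Ref ![1,0,0,-1,-1,0,0,-1] (Ref ![1,0,0,0,0,-1,-1,-1] w)))
    (hh₂ : ∀ w, h₂ w = Ref ![0,1,-1,0,0,0,0,0]
        (Ref ![0,0,0,1,-1,0,0,0] (Ref ![0,0,0,0,0,1,-1,0] w))) :
    ¬ ∃ Φ : (Fin 8 → ℤ) ≃ₗ[ℤ] (Fin 8 → ℤ),
        (∀ x y, Q (Φ x) (Φ y) = Q x y) ∧ ∀ x, h₁ x = Φ.symm (h₂ (Φ x)) := by
  -- Componentwise description of h₁.
  have hform : ∀ x : Fin 8 → ℤ,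
      h₁ x = x + (x 0 + x 5 + x 6 + x 7) • ![1,0,0,0,0,-1,-1,-1]
        + (x 0 + x 3 + x 4 + x 7) • ![1,0,0,-1,-1,0,0,-1]
        + (x 0 + x 1 + x 2 + x 7) • ![1,-1,-1,0,0,0,0,-1] := by
    intro x
    have q3 : Q ![1,0,0,0,0,-1,-1,-1] x = x 0 + x 5 + x 6 + x 7 := by
      rw [hQ]
      simp only [Fin.sum_univ_eight, Pi.add_apply, Pi.smul_apply, smul_eq_mul,
        Matrix.cons_val_zero, Matrix.cons_val_one, Matrix.cons_val_two, Matrix.cons_val_three,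
        Matrix.cons_val_four, fin8_val2, fin8_val3, fin8_val4, fin8_val5, fin8_val6, fin8_val7,
        cons_val_five, cons_val_six, cons_val_seven, Matrix.head_cons, Matrix.tail_cons,
        Nat.succ_ne_zero, if_true, if_false, reduceIte, Fin.val_zero, Fin.val_one]
      try ring
    have r3 : Ref ![1,0,0,0,0,-1,-1,-1] x
        = x + (x 0 + x 5 + x 6 + x 7) • ![1,0,0,0,0,-1,-1,-1] := by rw [hRef, q3]
    have q2 : Q ![1,0,0,-1,-1,0,0,-1] (Ref ![1,0,0,0,0,-1,-1,-1] x)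
        = x 0 + x 3 + x 4 + x 7 := by
      rw [r3, hQ]
      simp only [Fin.sum_univ_eight, Pi.add_apply, Pi.smul_apply, smul_eq_mul,
        Matrix.cons_val_zero, Matrix.cons_val_one, Matrix.cons_val_two, Matrix.cons_val_three,
        Matrix.cons_val_four, fin8_val2, fin8_val3, fin8_val4, fin8_val5, fin8_val6, fin8_val7,
        cons_val_five, cons_val_six, cons_val_seven, Matrix.head_cons, Matrix.tail_cons,
        Nat.succ_ne_zero, if_true, if_false, reduceIte, Fin.val_zero, Fin.val_one]
      try ring
    have r2 : Ref ![1,0,0,-1,-1,0,0,-1] (Ref ![1,0,0,0,0,-1,-1,-1] x)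
        = x + (x 0 + x 5 + x 6 + x 7) • ![1,0,0,0,0,-1,-1,-1]
          + (x 0 + x 3 + x 4 + x 7) • ![1,0,0,-1,-1,0,0,-1] := by
      rw [hRef, q2, r3]
    have q1 : Q ![1,-1,-1,0,0,0,0,-1]
        (Ref ![1,0,0,-1,-1,0,0,-1] (Ref ![1,0,0,0,0,-1,-1,-1] x))
        = x 0 + x 1 + x 2 + x 7 := by
      rw [r2, hQ]
      simp only [Fin.sum_univ_eight, Pi.add_apply, Pi.smul_apply, smul_eq_mul,
        Matrix.cons_val_zero, Matrix.cons_val_one, Matrix.cons_val_two, Matrix.cons_val_three,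
        Matrix.cons_val_four, fin8_val2, fin8_val3, fin8_val4, fin8_val5, fin8_val6, fin8_val7,
        cons_val_five, cons_val_six, cons_val_seven, Matrix.head_cons, Matrix.tail_cons,
        Nat.succ_ne_zero, if_true, if_false, reduceIte, Fin.val_zero, Fin.val_one]
      try ring
    rw [hh₁, hRef, q1, r2]
  -- Key invariant: `Q x (h₁ x)` is always even.
  have key : ∀ x : Fin 8 → ℤ, Even (Q x (h₁ x)) := by
    intro x
    refine ⟨2 * x 0 ^ 2 + x 7 ^ 2
      + x 0 * x 1 + x 0 * x 2 + x 0 * x 3 + x 0 * x 4 + x 0 * x 5 + x 0 * x 6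
      + 3 * x 0 * x 7 + x 1 * x 2 + x 1 * x 7 + x 2 * x 7 + x 3 * x 4 + x 3 * x 7
      + x 4 * x 7 + x 5 * x 6 + x 5 * x 7 + x 6 * x 7, ?_⟩
    rw [hform, hQ]
    simp only [Fin.sum_univ_eight, Pi.add_apply, Pi.smul_apply, smul_eq_mul,
      Matrix.cons_val_zero, Matrix.cons_val_one, Matrix.cons_val_two, Matrix.cons_val_three,
      Matrix.cons_val_four, fin8_val2, fin8_val3, fin8_val4, fin8_val5, fin8_val6, fin8_val7,
      cons_val_five, cons_val_six, cons_val_seven, Matrix.head_cons, Matrix.tail_cons,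
      Nat.succ_ne_zero, if_true, if_false, reduceIte, Fin.val_zero, Fin.val_one]
    ring
  rintro ⟨Φ, hΦ, hconj⟩
  -- But `Q e₀ (h₂ e₀) = 1` is odd, where `e₀ = (1,0,…,0)`.
  have h2fix : Q ![1,0,0,0,0,0,0,0] (h₂ ![1,0,0,0,0,0,0,0]) = 1 := by
    have q3 : Q ![0,0,0,0,0,1,-1,0] (![1,0,0,0,0,0,0,0] : Fin 8 → ℤ) = 0 := by
      rw [hQ]; norm_num [Fin.sum_univ_eight, fin8_val2, fin8_val3, fin8_val4, Matrix.cons_val_two, Matrix.cons_val_three, Matrix.cons_val_four, Matrix.head_cons, Matrix.tail_cons]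
    have r3 : Ref ![0,0,0,0,0,1,-1,0] (![1,0,0,0,0,0,0,0] : Fin 8 → ℤ)
        = ![1,0,0,0,0,0,0,0] := by rw [hRef, q3]; simp
    have q2 : Q ![0,0,0,1,-1,0,0,0] (![1,0,0,0,0,0,0,0] : Fin 8 → ℤ) = 0 := by
      rw [hQ]; norm_num [Fin.sum_univ_eight, fin8_val2, fin8_val3, fin8_val4, Matrix.cons_val_two, Matrix.cons_val_three, Matrix.cons_val_four, Matrix.head_cons, Matrix.tail_cons]
    have r2 : Ref ![0,0,0,1,-1,0,0,0] (![1,0,0,0,0,0,0,0] : Fin 8 → ℤ)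
        = ![1,0,0,0,0,0,0,0] := by rw [hRef, q2]; simp
    have q1 : Q ![0,1,-1,0,0,0,0,0] (![1,0,0,0,0,0,0,0] : Fin 8 → ℤ) = 0 := by
      rw [hQ]; norm_num [Fin.sum_univ_eight, fin8_val2, fin8_val3, fin8_val4, Matrix.cons_val_two, Matrix.cons_val_three, Matrix.cons_val_four, Matrix.head_cons, Matrix.tail_cons]
    have r1 : Ref ![0,1,-1,0,0,0,0,0] (![1,0,0,0,0,0,0,0] : Fin 8 → ℤ)
        = ![1,0,0,0,0,0,0,0] := by rw [hRef, q1]; simp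
    rw [hh₂, r3, r2, r1, hQ]
    norm_num [Fin.sum_univ_eight, fin8_val2, fin8_val3, fin8_val4, Matrix.cons_val_two, Matrix.cons_val_three, Matrix.cons_val_four, Matrix.head_cons, Matrix.tail_cons]
  have hx := hconj (Φ.symm ![1,0,0,0,0,0,0,0])
  have hval : Q (Φ.symm ![1,0,0,0,0,0,0,0]) (h₁ (Φ.symm ![1,0,0,0,0,0,0,0])) = 1 := by
    rw [hx, ← hΦ (Φ.symm ![1,0,0,0,0,0,0,0]), Φ.apply_symm_apply, Φ.apply_symm_apply, h2fix]
  obtain ⟨k, hk⟩ := key (Φ.symm ![1,0,0,0,0,0,0,0])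
  omega
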